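/- Let x, x' ∈ ℂ^{N+1} have full support and the same Fourier intensity function on the unit circle, with root factorizations x̂(ω) = a₀∏(ω-βᵢ), x̂'(ω) = a₀'∏(ω-βᵢ'). Then there exist a permutation τ of {1,…,N}, a subset S ⊆ {1,…,N}, and λ ∈ ℂ with |λ| = 1, such that β'_{τ(i)} = conj(βᵢ)⁻¹ for i ∈ S, β'_{τ(i)} = βᵢ for i ∉ S, and a₀' = λ a₀ ∏_{i∈S} conj(βᵢ). -/

import Mathlib

open ComplexConjugate

open ComplexConjugate Polynomial Finset



lemma multiset_split {α : Type*} [DecidableEq α] (σ : α → α) :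
    ∀ (B A : Multiset α), (∀ a ∈ A, σ (σ a) = a) →
      A + A.map σ = B + B.map σ →
      ∃ C D, A = C + D ∧ B = C + D.map σ := by
  intro B
  induction B using Multiset.induction with
  | empty =>
    intro A _ h
    simp only [Multiset.map_zero, add_zero] at h
    have hA : A = 0 := by
      have := congrArg Multiset.card h
      simp only [Multiset.card_add, Multiset.card_map, Multiset.card_zero] at this
      exact Multiset.card_eq_zero.mp (by omega)
    exact ⟨0, 0, by simp [hA], by simp⟩
  | cons b B₁ ih =>
    intro A hinv h
    have hb : b ∈ A + A.map σ := by rw [h]; simp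
    rw [Multiset.mem_add] at hb
    by_cases hbA : b ∈ A
    · obtain ⟨A₁, rfl⟩ : ∃ A₁, A = b ::ₘ A₁ := ⟨A.erase b, (Multiset.cons_erase hbA).symm⟩
      rw [Multiset.map_cons, Multiset.map_cons, Multiset.cons_add, Multiset.cons_add,
        Multiset.add_cons, Multiset.add_cons] at h
      have h' : A₁ + A₁.map σ = B₁ + B₁.map σ := by
        have h2 := (Multiset.cons_inj_right b).mp h
        exact (Multiset.cons_inj_right (σ b)).mp h2
      obtain ⟨C, D, hA, hB⟩ := ih A₁ (fun a ha => hinv a (by simp [ha])) h'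
      exact ⟨b ::ₘ C, D, by simp [hA, Multiset.cons_add], by simp [hB, Multiset.cons_add]⟩
    · have hbm : b ∈ A.map σ := hb.resolve_left hbA
      obtain ⟨a, haA, rfl⟩ := Multiset.mem_map.mp hbm
      obtain ⟨A₁, rfl⟩ : ∃ A₁, A = a ::ₘ A₁ := ⟨A.erase a, (Multiset.cons_erase haA).symm⟩
      have hσσ : σ (σ a) = a := hinv a (by simp)
      rw [Multiset.map_cons, Multiset.map_cons, hσσ, Multiset.cons_add, Multiset.cons_add,
        Multiset.add_cons, Multiset.add_cons, Multiset.cons_swap a (σ a)] at h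
      have h' : A₁ + A₁.map σ = B₁ + B₁.map σ := by
        have h2 := (Multiset.cons_inj_right (σ a)).mp h
        exact (Multiset.cons_inj_right a).mp h2
      obtain ⟨C, D, hA, hB⟩ := ih A₁ (fun x hx => hinv x (by simp [hx])) h'
      exact ⟨C, a ::ₘ D, by simp [hA, Multiset.add_cons],
        by simp [hB, Multiset.map_cons, Multiset.add_cons]⟩

lemma exists_le_of_le_map {α β : Type*} [DecidableEq β] (f : α → β) :
    ∀ (s : Multiset α) (C : Multiset β), C ≤ s.map f → ∃ t, t ≤ s ∧ t.map f = C := by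
  intro s
  induction s using Multiset.induction with
  | empty =>
    intro C hC
    simp only [Multiset.map_zero, Multiset.le_zero] at hC
    exact ⟨0, le_rfl, by simp [hC]⟩
  | cons a s ih =>
    intro C hC
    rw [Multiset.map_cons] at hC
    by_cases hfa : f a ∈ C
    · have h1 : C.erase (f a) ≤ s.map f := by
        have := Multiset.erase_le_erase (f a) hC
        rwa [Multiset.erase_cons_head] at this
      obtain ⟨t, ht, htm⟩ := ih _ h1
      refine ⟨a ::ₘ t, Multiset.cons_le_cons a ht, ?_⟩
      rw [Multiset.map_cons, htm, Multiset.cons_erase hfa]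
    · have h1 : C ≤ s.map f := by
        rw [Multiset.le_iff_count] at hC ⊢
        intro b
        by_cases hb : b = f a
        · subst hb
          simp [Multiset.count_eq_zero_of_notMem hfa]
        · have := hC b
          rwa [Multiset.count_cons_of_ne hb] at this
      obtain ⟨t, ht, htm⟩ := ih _ h1
      exact ⟨t, le_trans ht (Multiset.le_cons_self s a), htm⟩

lemma exists_perm_comp {n : ℕ} {α : Type*} [DecidableEq α] (f g : Fin n → α)
    (h : Multiset.map f Finset.univ.val = Multiset.map g Finset.univ.val) :
    ∃ τ : Equiv.Perm (Fin n), ∀ i, f (τ i) = g i := by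
  classical
  have hc : ∀ a : α, Fintype.card {i // g i = a} = Fintype.card {i // f i = a} := by
    intro a
    have hcount := congrArg (Multiset.count a) h
    rw [Multiset.count_map, Multiset.count_map] at hcount
    rw [Fintype.card_subtype, Fintype.card_subtype]
    have e1 : (Finset.univ.filter fun i => f i = a).card
        = Multiset.card (Multiset.filter (fun i => a = f i) Finset.univ.val) := by
      rw [Finset.card, Finset.filter_val]
      congr 1
      exact Multiset.filter_congr (fun x _ => by constructor <;> exact Eq.symm)
    have e2 : (Finset.univ.filter fun i => g i = a).card
        = Multiset.card (Multiset.filter (fun i => a = g i) Finset.univ.val) := by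
      rw [Finset.card, Finset.filter_val]
      congr 1
      exact Multiset.filter_congr (fun x _ => by constructor <;> exact Eq.symm)
    rw [e1, e2, hcount]
  refine ⟨Equiv.ofFiberEquiv (fun a => Fintype.equivOfCardEq (hc a)), fun i => ?_⟩
  exact Equiv.ofFiberEquiv_map _ i


lemma circle_infinite : {ω : ℂ | ‖ω‖ = 1}.Infinite := by
  have hne : ∀ t : ℝ, (1 - (t : ℂ) * Complex.I) ≠ 0 := by
    intro t h
    have := congrArg Complex.re h
    simp at this
  have hne' : ∀ t : ℝ, (1 + (t : ℂ) * Complex.I) ≠ 0 := by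
    intro t h
    have := congrArg Complex.re h
    simp at this
  apply Set.infinite_of_injective_forall_mem
    (f := fun t : ℝ => (1 + (t : ℂ) * Complex.I) / (1 - (t : ℂ) * Complex.I))
  · intro s t hst
    simp only at hst
    rw [div_eq_div_iff (hne s) (hne t)] at hst
    have h2 := congrArg Complex.im hst
    simp [Complex.add_im, Complex.mul_im, Complex.sub_im, Complex.sub_re, Complex.add_re,
      Complex.mul_re] at h2
    linarith
  · intro t
    simp only [Set.mem_setOf_eq]
    have hconj : (1 - (t : ℂ) * Complex.I) = conj (1 + (t : ℂ) * Complex.I) := by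
      simp [map_add, map_mul, Complex.conj_I, Complex.conj_ofReal]
      ring
    rw [norm_div, hconj, RCLike.norm_conj, div_self (norm_ne_zero_iff.mpr (hne' t))]


noncomputable def FP (N : ℕ) (a : ℂ) (β : Fin N → ℂ) : Polynomial ℂ :=
  Polynomial.C (a * conj a) *
    ∏ i, ((Polynomial.X - Polynomial.C (β i)) * (1 - Polynomial.C (conj (β i)) * Polynomial.X))

lemma FP_eval {N : ℕ} (a : ℂ) (β : Fin N → ℂ) {ω : ℂ} (hω : ‖ω‖ = 1) :
    (FP N a β).eval ω = ω ^ N * ((‖a * ∏ i, (ω - β i)‖ ^ 2 : ℝ) : ℂ) := by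
  have h1 : ω * conj ω = 1 := by
    rw [Complex.mul_conj]
    norm_cast
    rw [Complex.normSq_eq_norm_sq, hω, one_pow]
  have habs : ((‖a * ∏ i, (ω - β i)‖ ^ 2 : ℝ) : ℂ)
      = (a * ∏ i, (ω - β i)) * conj (a * ∏ i, (ω - β i)) := by
    rw [Complex.sq_norm, Complex.mul_conj]
  rw [FP, Polynomial.eval_mul, Polynomial.eval_C, Polynomial.eval_prod, habs]
  simp only [Polynomial.eval_mul, Polynomial.eval_sub, Polynomial.eval_X, Polynomial.eval_C,
    Polynomial.eval_one]
  rw [map_mul, map_prod]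
  simp only [map_sub]
  rw [Finset.prod_mul_distrib]
  have h2 : ∏ i : Fin N, (1 - conj (β i) * ω)
      = ω ^ N * ∏ i : Fin N, (conj ω - conj (β i)) := by
    have : ω ^ N = ∏ _i : Fin N, ω := by
      simp [Finset.prod_const, Finset.card_univ]
    rw [this, ← Finset.prod_mul_distrib]
    refine Finset.prod_congr rfl fun i _ => ?_
    linear_combination -h1
  rw [h2]; ring

lemma FP_fact {N : ℕ} (a : ℂ) (β : Fin N → ℂ) (hβ : ∀ i, β i ≠ 0) :
    FP N a β = Polynomial.C (a * conj a * ∏ i, (-(conj (β i)))) *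
      ((((Multiset.map β Finset.univ.val)
        + (Multiset.map β Finset.univ.val).map fun z => (conj z)⁻¹).map
          fun r => Polynomial.X - Polynomial.C r).prod) := by
  have hlin : ∀ i : Fin N, (1 - Polynomial.C (conj (β i)) * Polynomial.X)
      = Polynomial.C (-(conj (β i))) * (Polynomial.X - Polynomial.C ((conj (β i))⁻¹)) := by
    intro i
    have hne : conj (β i) ≠ 0 := by simpa using hβ i
    rw [mul_sub, ← Polynomial.C_mul, neg_mul, mul_inv_cancel₀ hne]
    simp only [map_neg, Polynomial.C_1]
    ring
  rw [FP, Finset.prod_congr rfl (fun i _ => by rw [hlin i]), Multiset.map_add,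
    Multiset.prod_add, Multiset.map_map, Multiset.map_map, Multiset.map_map]
  simp only [Function.comp_def]
  have e1 : ((Finset.univ.val.map fun i => Polynomial.X - Polynomial.C (β i))).prod
      = ∏ i : Fin N, (Polynomial.X - Polynomial.C (β i)) :=
    (Finset.prod_eq_multiset_prod _ _).symm
  have e2 : ((Finset.univ.val.map fun i =>
        Polynomial.X - Polynomial.C ((conj (β i))⁻¹))).prod
      = ∏ i : Fin N, (Polynomial.X - Polynomial.C ((conj (β i))⁻¹)) :=
    (Finset.prod_eq_multiset_prod _ _).symm
  have e3 : Polynomial.C (a * conj a * ∏ i, (-(conj (β i))))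
      = Polynomial.C (a * conj a) * ∏ i, Polynomial.C (-(conj (β i))) := by
    rw [Polynomial.C_mul, map_prod]
  rw [e1, e2, e3, Finset.prod_mul_distrib, Finset.prod_mul_distrib]
  ring

lemma FP_roots {N : ℕ} (a : ℂ) (β : Fin N → ℂ) (ha : a ≠ 0) (hβ : ∀ i, β i ≠ 0) :
    (FP N a β).roots = (Multiset.map β Finset.univ.val)
      + (Multiset.map β Finset.univ.val).map fun z => (conj z)⁻¹ := by
  rw [FP_fact a β hβ, Polynomial.roots_C_mul, Polynomial.roots_multiset_prod_X_sub_C]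
  refine mul_ne_zero (mul_ne_zero ha (by simpa using ha)) ?_
  exact Finset.prod_ne_zero_iff.mpr fun i _ => by simpa using hβ i
/-- Uniqueness of phase retrieval on the root cover: two full-support signals with
root factorizations `a₀ ∏ (ω - βᵢ)` and `a₀' ∏ (ω - βᵢ')` and equal Fourier
intensity functions differ by an element of the root ambiguity group:
a permutation of the roots, reflection of a subset `S` of roots across the unit
circle, and a unimodular scalar with `a₀' = λ a₀ ∏_{i ∈ S} conj (βᵢ)`. -/
theorem root_cover_phase_retrieval (N : ℕ) (a₀ a₀' : ℂ)
    (ha : a₀ ≠ 0) (ha' : a₀' ≠ 0) (β β' : Fin N → ℂ)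
    (hβ : ∀ i, β i ≠ 0) (hβ' : ∀ i, β' i ≠ 0)
    (h : ∀ ω : ℂ, ‖ω‖ = 1 →
      ‖a₀ * ∏ i, (ω - β i)‖ ^ 2 =
        ‖a₀' * ∏ i, (ω - β' i)‖ ^ 2) :
    ∃ (τ : Equiv.Perm (Fin N)) (S : Finset (Fin N)) (lam : ℂ), ‖lam‖ = 1 ∧
      (∀ i ∈ S, β' (τ i) = (conj (β i))⁻¹) ∧
      (∀ i ∉ S, β' (τ i) = β i) ∧
      a₀' = lam * a₀ * ∏ i ∈ S, conj (β i) := by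
  classical
  -- Step 1: the two reflected polynomials are equal
  have Peq : FP N a₀ β = FP N a₀' β' := by
    apply Polynomial.eq_of_infinite_eval_eq
    apply Set.Infinite.mono ?_ circle_infinite
    intro ω hω
    simp only [Set.mem_setOf_eq] at hω ⊢
    rw [FP_eval a₀ β hω, FP_eval a₀' β' hω, h ω hω]
  -- Step 2: equal root multisets
  set A : Multiset ℂ := Multiset.map β Finset.univ.val with hA
  set A' : Multiset ℂ := Multiset.map β' Finset.univ.val with hA'
  have hM : A + A.map (fun z => (conj z)⁻¹) = A' + A'.map (fun z => (conj z)⁻¹) := by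
    have := congrArg Polynomial.roots Peq
    rwa [FP_roots a₀ β ha hβ, FP_roots a₀' β' ha' hβ'] at this
  have hinvA : ∀ z ∈ A, (fun z : ℂ => (conj z)⁻¹) ((fun z : ℂ => (conj z)⁻¹) z) = z := by
    intro z hz
    obtain ⟨i, _, rfl⟩ := Multiset.mem_map.mp hz
    simp [map_inv₀]
  obtain ⟨Cm, D, hAeq, hA'eq⟩ := multiset_split (fun z : ℂ => (conj z)⁻¹) A' A hinvA hM
  -- Step 3: realize D as a subset S of indices
  have hDle : D ≤ A := by rw [hAeq]; exact Multiset.le_add_left _ _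
  obtain ⟨t, htle, htmap⟩ := exists_le_of_le_map β Finset.univ.val D (by rwa [← hA])
  set S : Finset (Fin N) := ⟨t, Multiset.nodup_of_le htle Finset.univ.nodup⟩ with hS
  have hSval : S.val = t := rfl
  have hSle : S.val ≤ Finset.univ.val := htle
  have hsplit : Finset.univ.val = (Finset.univ \ S).val + S.val := by
    rw [Finset.sdiff_val, tsub_add_cancel_of_le hSle]
  have hDmap : Multiset.map β S.val = D := by rw [hSval]; exact htmap
  have hCeq : Cm = Multiset.map β (Finset.univ \ S).val := by
    have hAsplit : A = Multiset.map β (Finset.univ \ S).val + D := by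
      rw [hA, hsplit, Multiset.map_add, hDmap]
    rw [hAeq] at hAsplit
    exact add_right_cancel hAsplit
  -- Step 4: find the permutation
  set γ : Fin N → ℂ := fun i => if i ∈ S then (conj (β i))⁻¹ else β i with hγdef
  have hγ : A' = Multiset.map γ Finset.univ.val := by
    rw [hA'eq, hCeq, ← hDmap, hsplit, Multiset.map_add, Multiset.map_map]
    congr 1
    · refine Multiset.map_congr rfl fun i hi => ?_
      have : i ∉ S := (Finset.mem_sdiff.mp hi).2
      simp [hγdef, this]
    · refine Multiset.map_congr rfl fun i hi => ?_
      have : i ∈ S := hi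
      simp [hγdef, this, Function.comp]
  obtain ⟨τ, hτ⟩ := exists_perm_comp β' γ (by rw [← hA', hγ])
  -- Step 5: leading coefficients
  have hQmonic : ((((A + A.map fun z => (conj z)⁻¹)).map
      fun r => Polynomial.X - Polynomial.C r).prod).Monic :=
    Polynomial.monic_multiset_prod_of_monic _ _ fun r _ => Polynomial.monic_X_sub_C r
  have hc : a₀ * conj a₀ * ∏ i, (-(conj (β i)))
      = a₀' * conj a₀' * ∏ i, (-(conj (β' i))) := by
    have e1 := FP_fact a₀ β hβ
    have e2 := FP_fact a₀' β' hβ'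
    rw [e1, e2, ← hA, ← hA', ← hM] at Peq
    have := mul_right_cancel₀ hQmonic.ne_zero Peq
    exact Polynomial.C_injective this
  -- rewrite the β' product via τ and γ
  have hre : (∏ i, (-(conj (β' i))))
      = (∏ i ∈ S, (-(β i)⁻¹)) * ∏ i ∈ Sᶜ, (-(conj (β i))) := by
    rw [← Equiv.prod_comp τ (fun i => (-(conj (β' i)))), ← Finset.prod_mul_prod_compl S]
    congr 1
    · refine Finset.prod_congr rfl fun i hi => ?_
      rw [hτ i]
      simp [hγdef, hi, map_inv₀]
    · refine Finset.prod_congr rfl fun i hi => ?_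
      rw [hτ i]
      simp [hγdef, Finset.mem_compl.mp hi]
  have hsplitβ : (∏ i, (-(conj (β i))))
      = (∏ i ∈ S, (-(conj (β i)))) * ∏ i ∈ Sᶜ, (-(conj (β i))) :=
    (Finset.prod_mul_prod_compl S _).symm
  have hXne : (∏ i ∈ Sᶜ, (-(conj (β i)))) ≠ 0 :=
    Finset.prod_ne_zero_iff.mpr fun i _ => by simpa using hβ i
  have hc2 : a₀ * conj a₀ * ∏ i ∈ S, (-(conj (β i)))
      = a₀' * conj a₀' * ∏ i ∈ S, (-(β i)⁻¹) := by
    apply mul_right_cancel₀ hXne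
    rw [hre, hsplitβ] at hc
    linear_combination hc
  have heq : a₀' * conj a₀' = a₀ * conj a₀ * ∏ i ∈ S, (β i * conj (β i)) := by
    have h1 : (∏ i ∈ S, (-(β i)⁻¹)) * ∏ i ∈ S, (-(β i)) = 1 := by
      rw [← Finset.prod_mul_distrib]
      exact Finset.prod_eq_one fun i _ => by rw [neg_mul_neg, inv_mul_cancel₀ (hβ i)]
    have h2 : (∏ i ∈ S, (-(conj (β i)))) * ∏ i ∈ S, (-(β i))
        = ∏ i ∈ S, (β i * conj (β i)) := by
      rw [← Finset.prod_mul_distrib]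
      exact Finset.prod_congr rfl fun i _ => by ring
    calc a₀' * conj a₀'
        = a₀' * conj a₀' * ((∏ i ∈ S, (-(β i)⁻¹)) * ∏ i ∈ S, (-(β i))) := by rw [h1]; ring
      _ = (a₀' * conj a₀' * ∏ i ∈ S, (-(β i)⁻¹)) * ∏ i ∈ S, (-(β i)) := by ring
      _ = (a₀ * conj a₀ * ∏ i ∈ S, (-(conj (β i)))) * ∏ i ∈ S, (-(β i)) := by rw [hc2]
      _ = a₀ * conj a₀ * ∏ i ∈ S, (β i * conj (β i)) := by rw [mul_assoc, h2]
  -- Step 6: the unimodular scalar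
  have hpconjne : (∏ i ∈ S, conj (β i)) ≠ 0 :=
    Finset.prod_ne_zero_iff.mpr fun i _ => by simpa using hβ i
  have hpne : (∏ i ∈ S, β i) ≠ 0 :=
    Finset.prod_ne_zero_iff.mpr fun i _ => hβ i
  have hden : a₀ * ∏ i ∈ S, conj (β i) ≠ 0 := mul_ne_zero ha hpconjne
  set lam : ℂ := a₀' / (a₀ * ∏ i ∈ S, conj (β i)) with hlam
  have hconjlam : conj lam = conj a₀' / (conj a₀ * ∏ i ∈ S, β i) := by
    rw [hlam, map_div₀, map_mul, map_prod]
    simp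
  have hll : lam * conj lam = 1 := by
    rw [hlam, hconjlam, div_mul_div_comm]
    rw [div_eq_one_iff_eq (by
      exact mul_ne_zero hden (mul_ne_zero (by simpa using ha) hpne))]
    have h3 : (∏ i ∈ S, (β i * conj (β i)))
        = (∏ i ∈ S, conj (β i)) * ∏ i ∈ S, β i := by
      rw [← Finset.prod_mul_distrib]
      exact Finset.prod_congr rfl fun i _ => by ring
    rw [heq, h3]; ring
  have hnorm : ‖lam‖ = 1 := by
    have : (Complex.normSq lam : ℂ) = 1 := by rw [← Complex.mul_conj]; exact hll
    have hns : Complex.normSq lam = 1 := by exact_mod_cast this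
    have h4 : ‖lam‖ ^ 2 = 1 := by
      rw [Complex.sq_norm]
      exact hns
    have h0 : 0 ≤ ‖lam‖ := norm_nonneg _
    nlinarith
  refine ⟨τ, S, lam, hnorm, ?_, ?_, ?_⟩
  · intro i hi
    rw [hτ i]
    simp [hγdef, hi]
  · intro i hi
    rw [hτ i]
    simp [hγdef, hi]
  · rw [hlam]
    field_simp
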